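/- Let I be an ideal of A and G ⊆ I. Then G is an SG-basis for I if and only if every nonzero h ∈ I has an SG-representation with respect to G, i.e., a representation h = Σ_{i=1}^M a_i g_i with a_i ∈ A and g_i ∈ G such that max_i lp(a_i g_i) = lp(h). -/

import Mathlib

open MvPolynomial

/-- A term order on the monomials (exponent vectors) of a polynomial ring in `n`
variables: a well-founded linear order compatible with multiplication of power
products (i.e. with addition of exponent vectors). -/
structure TermOrder (n : ℕ) where
  lo : LinearOrder (Fin n →₀ ℕ)
  wf : WellFounded lo.lt
  add_le_add : ∀ a b c : Fin n →₀ ℕ, lo.le a b → lo.le (a + c) (b + c)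

namespace TermOrder

variable {n : ℕ} {R : Type*} [CommRing R]

/-- `lp p`: the leading power product (exponent vector) of `p`; junk value `0`
for the zero polynomial. -/
noncomputable def lp (ord : TermOrder n) (p : MvPolynomial (Fin n) R) : Fin n →₀ ℕ :=
  (@Finset.max _ ord.lo p.support).unbotD 0

/-- `lc p`: the leading coefficient of `p` (0 if `p = 0`). -/
noncomputable def lc (ord : TermOrder n) (p : MvPolynomial (Fin n) R) : R :=
  p.coeff (ord.lp p)

/-- `ltm p`: the leading term `lc(p)·lp(p)` of `p` (0 if `p = 0`). -/
noncomputable def ltm (ord : TermOrder n) (p : MvPolynomial (Fin n) R) : MvPolynomial (Fin n) R :=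
  monomial (ord.lp p) (ord.lc p)


variable (ord : TermOrder n)


section OrderHelpers

variable {a b c : Fin n →₀ ℕ}

lemma le_rfl' : ord.lo.le a a := @le_refl _ ord.lo.toPartialOrder.toPreorder a

lemma le_of_lt' (h : ord.lo.lt a b) : ord.lo.le a b :=
  @le_of_lt _ ord.lo.toPartialOrder.toPreorder _ _ h

lemma le_of_eq' (h : a = b) : ord.lo.le a b := h ▸ ord.le_rfl'

lemma le_trans' (h1 : ord.lo.le a b) (h2 : ord.lo.le b c) : ord.lo.le a c :=
  @le_trans _ ord.lo.toPartialOrder.toPreorder a b c h1 h2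

lemma not_le_of_lt' (h : ord.lo.lt a b) : ¬ ord.lo.le b a :=
  @not_le_of_gt _ ord.lo.toPartialOrder.toPreorder _ _ h

lemma lt_of_le_of_ne' (h : ord.lo.le a b) (h2 : a ≠ b) : ord.lo.lt a b :=
  @lt_of_le_of_ne _ ord.lo.toPartialOrder _ _ h h2

lemma lt_or_le' (a b : Fin n →₀ ℕ) : ord.lo.lt a b ∨ ord.lo.le b a := @lt_or_ge _ ord.lo a b

lemma eq_or_lt_of_le' (h : ord.lo.le a b) : a = b ∨ ord.lo.lt a b :=
  (@lt_or_eq_of_le _ ord.lo.toPartialOrder _ _ h).symm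

lemma le_antisymm' (h1 : ord.lo.le a b) (h2 : ord.lo.le b a) : a = b :=
  @le_antisymm _ ord.lo.toPartialOrder _ _ h1 h2

lemma ne_of_lt' (h : ord.lo.lt a b) : a ≠ b :=
  @ne_of_lt _ ord.lo.toPartialOrder.toPreorder _ _ h

lemma lt_of_lt_of_le' (h1 : ord.lo.lt a b) (h2 : ord.lo.le b c) : ord.lo.lt a c :=
  @lt_of_lt_of_le _ ord.lo.toPartialOrder.toPreorder _ _ _ h1 h2

end OrderHelpers

lemma max_support_eq {p : MvPolynomial (Fin n) R} (hp : p ≠ 0) :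
    @Finset.max _ ord.lo p.support = (ord.lp p : WithBot (Fin n →₀ ℕ)) := by
  obtain ⟨b, hb⟩ := @Finset.max_of_nonempty _ ord.lo _ (MvPolynomial.support_nonempty.mpr hp)
  rw [hb]
  congr 1
  rw [TermOrder.lp, hb, WithBot.unbotD_coe]

lemma lp_mem_support {p : MvPolynomial (Fin n) R} (hp : p ≠ 0) :
    ord.lp p ∈ p.support :=
  @Finset.mem_of_max _ ord.lo _ _ (ord.max_support_eq hp)

lemma lc_ne_zero {p : MvPolynomial (Fin n) R} (hp : p ≠ 0) : ord.lc p ≠ 0 :=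
  MvPolynomial.mem_support_iff.mp (ord.lp_mem_support hp)

lemma le_lp {p : MvPolynomial (Fin n) R} {β : Fin n →₀ ℕ}
    (h : MvPolynomial.coeff β p ≠ 0) : ord.lo.le β (ord.lp p) := by
  have hp : p ≠ 0 := by rintro rfl; simp at h
  have h1 := @Finset.le_max _ ord.lo β _ (MvPolynomial.mem_support_iff.mpr h)
  rw [ord.max_support_eq hp] at h1
  exact (@WithBot.coe_le_coe _ β (ord.lp p) ord.lo.toPartialOrder.toPreorder.toLE).mp h1

lemma coeff_eq_zero_of_lt {p : MvPolynomial (Fin n) R} {β : Fin n →₀ ℕ}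
    (h : ord.lo.lt (ord.lp p) β) : MvPolynomial.coeff β p = 0 := by
  by_contra hc
  exact absurd (ord.le_lp hc) (ord.not_le_of_lt' h)

lemma lp_zero : ord.lp (0 : MvPolynomial (Fin n) R) = 0 := by
  rw [TermOrder.lp, MvPolynomial.support_zero]
  rfl

lemma ltm_zero : ord.ltm (0 : MvPolynomial (Fin n) R) = 0 := by
  rw [TermOrder.ltm, TermOrder.lc]
  simp

lemma add_lt_add_right' {a b : Fin n →₀ ℕ} (h : ord.lo.lt a b) (c : Fin n →₀ ℕ) :
    ord.lo.lt (a + c) (b + c) := by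
  refine ord.lt_of_le_of_ne' (ord.add_le_add a b c (ord.le_of_lt' h)) ?_
  intro he
  exact (ord.ne_of_lt' h) (add_right_cancel he)

lemma coeff_lp_add_lp_mul {p q : MvPolynomial (Fin n) R} (hp : p ≠ 0) (hq : q ≠ 0) :
    MvPolynomial.coeff (ord.lp p + ord.lp q) (p * q) = ord.lc p * ord.lc q := by
  rw [MvPolynomial.coeff_mul]
  rw [Finset.sum_eq_single (ord.lp p, ord.lp q)]
  · rfl
  · rintro ⟨u, v⟩ hmem hne
    rw [Finset.HasAntidiagonal.mem_antidiagonal] at hmem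
    rcases ord.lt_or_le' (ord.lp p) u with hu | hu
    · rw [ord.coeff_eq_zero_of_lt hu, zero_mul]
    · rcases ord.lt_or_le' (ord.lp q) v with hv | hv
      · rw [ord.coeff_eq_zero_of_lt hv, mul_zero]
      · exfalso
        have hu' : u = ord.lp p := by
          rcases ord.eq_or_lt_of_le' hu with h' | h'
          · exact h'
          · exfalso
            have h1 : ord.lo.lt (u + v) (ord.lp p + v) := ord.add_lt_add_right' h' v
            have h2 : ord.lo.le (ord.lp p + v) (ord.lp p + ord.lp q) := by
              rw [add_comm (ord.lp p) v, add_comm (ord.lp p) (ord.lp q)]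
              exact ord.add_le_add v (ord.lp q) (ord.lp p) hv
            rw [hmem] at h1
            exact absurd h2 (ord.not_le_of_lt' h1)
        have hv' : v = ord.lp q := by
          rw [hu'] at hmem
          exact add_left_cancel hmem
        exact hne (by rw [hu', hv'])
  · intro hb
    exfalso
    apply hb
    rw [Finset.HasAntidiagonal.mem_antidiagonal]


lemma lp_mul [IsDomain R] {p q : MvPolynomial (Fin n) R} (hp : p ≠ 0) (hq : q ≠ 0) :
    ord.lp (p * q) = ord.lp p + ord.lp q := by
  have hpq : MvPolynomial.coeff (ord.lp p + ord.lp q) (p * q) ≠ 0 := by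
    rw [ord.coeff_lp_add_lp_mul hp hq]
    exact mul_ne_zero (ord.lc_ne_zero hp) (ord.lc_ne_zero hq)
  refine ord.le_antisymm' ?_ (ord.le_lp hpq)
  have h0 : p * q ≠ 0 := fun h => hpq (by rw [h]; simp)
  have hmem := MvPolynomial.mem_support_iff.mp (ord.lp_mem_support h0)
  rw [MvPolynomial.coeff_mul] at hmem
  obtain ⟨⟨u, v⟩, huv, hne⟩ := Finset.exists_ne_zero_of_sum_ne_zero hmem
  rw [Finset.HasAntidiagonal.mem_antidiagonal] at huv
  have hu : ord.lo.le u (ord.lp p) := ord.le_lp (fun h => hne (by rw [h, zero_mul]))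
  have hv : ord.lo.le v (ord.lp q) := ord.le_lp (fun h => hne (by rw [h, mul_zero]))
  rw [← huv]
  refine ord.le_trans' (ord.add_le_add u (ord.lp p) v hu) ?_
  rw [add_comm (ord.lp p) v, add_comm (ord.lp p) (ord.lp q)]
  exact ord.add_le_add v (ord.lp q) (ord.lp p) hv

lemma lc_mul [IsDomain R] {p q : MvPolynomial (Fin n) R} (hp : p ≠ 0) (hq : q ≠ 0) :
    ord.lc (p * q) = ord.lc p * ord.lc q := by
  show MvPolynomial.coeff (ord.lp (p * q)) (p * q) = ord.lc p * ord.lc q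
  rw [ord.lp_mul hp hq, ord.coeff_lp_add_lp_mul hp hq]

lemma ltm_mul [IsDomain R] (p q : MvPolynomial (Fin n) R) :
    ord.ltm (p * q) = ord.ltm p * ord.ltm q := by
  by_cases hp : p = 0
  · subst hp; rw [zero_mul, ord.ltm_zero, zero_mul]
  by_cases hq : q = 0
  · subst hq; rw [mul_zero, ord.ltm_zero, mul_zero]
  rw [TermOrder.ltm, TermOrder.ltm, TermOrder.ltm, ord.lp_mul hp hq, ord.lc_mul hp hq,
    MvPolynomial.monomial_mul]

lemma ltm_C (r : R) : ord.ltm (MvPolynomial.C r) = MvPolynomial.C r := by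
  classical
  by_cases hr : r = 0
  · subst hr; rw [map_zero, ord.ltm_zero]
  have hs : (MvPolynomial.C (σ := Fin n) r).support = {0} := by
    rw [← MvPolynomial.monomial_zero', MvPolynomial.support_monomial, if_neg hr]
  have hlp : ord.lp (MvPolynomial.C r) = 0 := by
    rw [TermOrder.lp, hs]
    rfl
  rw [TermOrder.ltm, hlp, TermOrder.lc, hlp, MvPolynomial.coeff_zero_C,
    MvPolynomial.monomial_zero']


lemma coeff_multiset_sum (β : Fin n →₀ ℕ) (s : Multiset (MvPolynomial (Fin n) R)) :
    MvPolynomial.coeff β s.sum = (s.map (MvPolynomial.coeff β)).sum := by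
  induction s using Multiset.induction_on with
  | empty => simp
  | cons p s ih => simp [ih]

lemma exists_multiset_of_mem_adjoin [IsDomain R] {A : Subalgebra R (MvPolynomial (Fin n) R)}
    {x : MvPolynomial (Fin n) R}
    (hx : x ∈ Algebra.adjoin R (ord.ltm '' (A : Set (MvPolynomial (Fin n) R)))) :
    ∃ s : Multiset A, x = (s.map (fun a : A => ord.ltm a.val)).sum := by
  induction hx using Algebra.adjoin_induction with
  | mem y hy =>
    obtain ⟨a, ha, rfl⟩ := hy
    exact ⟨{⟨a, ha⟩}, by simp⟩
  | algebraMap r =>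
    refine ⟨{⟨MvPolynomial.C r, A.algebraMap_mem r⟩}, ?_⟩
    simp only [Multiset.map_singleton, Multiset.sum_singleton]
    rw [MvPolynomial.algebraMap_eq, ord.ltm_C r]
  | add y z hy hz ihy ihz =>
    obtain ⟨s, rfl⟩ := ihy
    obtain ⟨t, rfl⟩ := ihz
    exact ⟨s + t, by rw [Multiset.map_add, Multiset.sum_add]⟩
  | mul y z hy hz ihy ihz =>
    obtain ⟨s, rfl⟩ := ihy
    obtain ⟨t, rfl⟩ := ihz
    refine ⟨s.bind (fun a => t.map (fun b => a * b)), ?_⟩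
    rw [Multiset.map_bind, Multiset.sum_bind]
    have hstep : ∀ a : A,
        (((t.map (fun b : A => a * b))).map (fun p : A => ord.ltm p.val)).sum
        = ord.ltm a.val * (t.map (fun p : A => ord.ltm p.val)).sum := by
      intro a
      rw [Multiset.map_map]
      rw [show ((fun p : A => ord.ltm p.val) ∘ (fun b : A => a * b))
          = fun b : A => ord.ltm a.val * ord.ltm b.val by
        funext b
        simp only [Function.comp_apply, MulMemClass.coe_mul]
        rw [ord.ltm_mul]]
      exact Multiset.sum_map_mul_left
    rw [show (s.map (fun a : A => (((t.map (fun b : A => a * b))).map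
        (fun p : A => ord.ltm p.val)).sum))
        = s.map (fun a : A => ord.ltm a.val * (t.map (fun p : A => ord.ltm p.val)).sum) from
      Multiset.map_congr rfl (fun a _ => hstep a)]
    exact (Multiset.sum_map_mul_right).symm


end TermOrder

lemma exists_fin_index {α β : Type*} [AddCommMonoid β] (f : α → β) (P : α → Prop)
    (s : Multiset α) (hP : ∀ a ∈ s, P a) :
    ∃ (M : ℕ) (g : Fin M → α), (∀ i, P (g i)) ∧ (s.map f).sum = ∑ i, f (g i) ∧
      ∀ a ∈ s, ∃ i, g i = a := by
  induction s using Multiset.induction_on with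
  | empty =>
    exact ⟨0, Fin.elim0, fun i => i.elim0, by simp,
      fun a ha => absurd ha (Multiset.notMem_zero a)⟩
  | cons a s ih =>
    obtain ⟨M, g, h1, h2, h3⟩ := ih (fun b hb => hP b (Multiset.mem_cons_of_mem hb))
    refine ⟨M + 1, Fin.cons a g, ?_, ?_, ?_⟩
    · intro i
      refine Fin.cases ?_ ?_ i
      · exact hP a (Multiset.mem_cons_self a s)
      · intro j
        simpa using h1 j
    · rw [Multiset.map_cons, Multiset.sum_cons, h2, Fin.sum_univ_succ]
      simp
    · intro b hb
      rcases Multiset.mem_cons.mp hb with rfl | hb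
      · exact ⟨0, rfl⟩
      · obtain ⟨i, hi⟩ := h3 b hb
        exact ⟨i.succ, by simpa using hi⟩



variable {n : ℕ} {R : Type*} [CommRing R]

/-- An `F`-power product: a finite product `∏ fᵢ^{eᵢ}` with `fᵢ ∈ F`. -/
def IsPowerProduct (F : Set (MvPolynomial (Fin n) R)) (q : MvPolynomial (Fin n) R) : Prop :=
  ∃ e : MvPolynomial (Fin n) R →₀ ℕ, (e.support : Set (MvPolynomial (Fin n) R)) ⊆ F ∧
    q = e.prod (fun f k => f ^ k)

/-- `F` is a SAGBI basis for the `R`-subalgebra `A`: `R[Lt A] = R[Lt F]`. -/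
def IsSAGBI (ord : TermOrder n) (A : Subalgebra R (MvPolynomial (Fin n) R))
    (F : Set (MvPolynomial (Fin n) R)) : Prop :=
  Algebra.adjoin R (ord.ltm '' (A : Set (MvPolynomial (Fin n) R))) =
    Algebra.adjoin R (ord.ltm '' F)

/-- One step of s-reduction of `g` to `h` via `F`. -/
def SStep (ord : TermOrder n) (F : Set (MvPolynomial (Fin n) R))
    (g h : MvPolynomial (Fin n) R) : Prop :=
  ∃ (β : Fin n →₀ ℕ) (N : ℕ) (q : Fin N → MvPolynomial (Fin n) R) (r : Fin N → R),
    g.coeff β ≠ 0 ∧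
    (∀ i, IsPowerProduct F (q i) ∧ q i ≠ 0 ∧ ord.lp (q i) = β) ∧
    g.coeff β = ∑ i, r i * ord.lc (q i) ∧
    h = g - ∑ i, C (r i) * q i

/-- `g` s-reduces to `h` via `F`: a finite chain of one-step s-reductions. -/
def SReduce (ord : TermOrder n) (F : Set (MvPolynomial (Fin n) R)) :
    MvPolynomial (Fin n) R → MvPolynomial (Fin n) R → Prop :=
  Relation.ReflTransGen (SStep ord F)

/-- One step of si-reduction of `h` to `h'` via `G`, relative to the subalgebra `A`. -/
def SiStep (ord : TermOrder n) (A : Subalgebra R (MvPolynomial (Fin n) R))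
    (G : Set (MvPolynomial (Fin n) R)) (h h' : MvPolynomial (Fin n) R) : Prop :=
  ∃ (α : Fin n →₀ ℕ) (M : ℕ) (g a : Fin M → MvPolynomial (Fin n) R),
    h.coeff α ≠ 0 ∧
    (∀ i, g i ∈ G) ∧ (∀ i, a i ∈ A) ∧
    (∀ i, a i * g i ≠ 0 ∧ ord.lp (a i * g i) = α) ∧
    (monomial α (h.coeff α) : MvPolynomial (Fin n) R) = ∑ i, ord.ltm (a i * g i) ∧
    h' = h - ∑ i, a i * g i

/-- `h` si-reduces to `h'` via `G`: a finite chain of one-step si-reductions. -/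
def SiReduce (ord : TermOrder n) (A : Subalgebra R (MvPolynomial (Fin n) R))
    (G : Set (MvPolynomial (Fin n) R)) :
    MvPolynomial (Fin n) R → MvPolynomial (Fin n) R → Prop :=
  Relation.ReflTransGen (SiStep ord A G)

/-- The subalgebra `R[Lt A]` generated by the leading terms of elements of `A`. -/
noncomputable def LtAlg (ord : TermOrder n) (A : Subalgebra R (MvPolynomial (Fin n) R)) :
    Subalgebra R (MvPolynomial (Fin n) R) :=
  Algebra.adjoin R (ord.ltm '' (A : Set (MvPolynomial (Fin n) R)))

/-- The leading term of an element of `A`, as an element of `R[Lt A]`. -/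
noncomputable def ltA (ord : TermOrder n) (A : Subalgebra R (MvPolynomial (Fin n) R))
    (a : A) : LtAlg ord A :=
  ⟨ord.ltm (a : MvPolynomial (Fin n) R), Algebra.subset_adjoin ⟨a, a.2, rfl⟩⟩

/-- `G ⊆ I` is a SAGBI–Gröbner basis (SG-basis) for the ideal `I` of `A`:
`Lt G` generates the ideal `⟨Lt I⟩` in the subalgebra `R[Lt A]`. -/
def IsSGBasis (ord : TermOrder n) (A : Subalgebra R (MvPolynomial (Fin n) R))
    (I : Ideal A) (G : Set A) : Prop :=
  Ideal.span
      ((Subtype.val ⁻¹' (ord.ltm '' (Subtype.val '' G)) : Set (LtAlg ord A))) =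
  Ideal.span
      ((Subtype.val ⁻¹' (ord.ltm '' (Subtype.val '' (I : Set A))) : Set (LtAlg ord A)))

/-- Auxiliary predicate: `h` has a multiset SG-representation with top power product `α`. -/
def SGRepM (ord : TermOrder n) (A : Subalgebra R (MvPolynomial (Fin n) R))
    (G : Set A) (α : Fin n →₀ ℕ) (h : A) : Prop :=
  ∃ m : Multiset (A × A),
    (∀ p ∈ m, p.2 ∈ G ∧ (p.1.val * p.2.val : MvPolynomial (Fin n) R) ≠ 0 ∧
        ord.lo.le (ord.lp (p.1.val * p.2.val)) α) ∧
    (∃ p ∈ m, ord.lp ((p.1.val * p.2.val : MvPolynomial (Fin n) R)) = α) ∧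
    h.val = (m.map (fun p : A × A => p.1.val * p.2.val)).sum

set_option maxHeartbeats 2000000 in
set_option synthInstance.maxHeartbeats 400000 in
lemma sg_rep_multiset [IsDomain R]
    (ord : TermOrder n) (A : Subalgebra R (MvPolynomial (Fin n) R)) (I : Ideal A) (G : Set A)
    (hGI : G ⊆ (I : Set A)) (hSG : IsSGBasis ord A I G) (α : Fin n →₀ ℕ) :
    ∀ h : A, h ∈ I → (h : MvPolynomial (Fin n) R) ≠ 0 →
      ord.lp (h : MvPolynomial (Fin n) R) = α → SGRepM ord A G α h := by
  classical
  refine ord.wf.induction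
    (C := fun γ => ∀ h : A, h ∈ I → (h : MvPolynomial (Fin n) R) ≠ 0 →
      ord.lp (h : MvPolynomial (Fin n) R) = γ → SGRepM ord A G γ h) α ?_
  clear α
  intro α IH h hI hne hlp
  have hxmem : ord.ltm (h.val) ∈ LtAlg ord A :=
    Algebra.subset_adjoin ⟨h.val, h.2, rfl⟩
  have hxspan : (⟨ord.ltm h.val, hxmem⟩ : LtAlg ord A) ∈ Ideal.span
      ((Subtype.val ⁻¹' (ord.ltm '' (Subtype.val '' G)) : Set (LtAlg ord A))) := by
    rw [hSG]
    exact Ideal.subset_span (Set.mem_preimage.mpr ⟨h.val, ⟨h, hI, rfl⟩, rfl⟩)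
  obtain ⟨c, hcsupp, hcsum⟩ := Submodule.mem_span_set.mp hxspan
  have hgex : ∀ y : LtAlg ord A, y ∈ c.support →
      ∃ g : A, g ∈ G ∧ y.val = ord.ltm g.val := by
    intro y hy
    obtain ⟨w, ⟨g, hgG, rfl⟩, hval⟩ := hcsupp hy
    exact ⟨g, hgG, hval.symm⟩
  choose gg hggG hggy using hgex
  have hsex : ∀ y : LtAlg ord A,
      ∃ s : Multiset A, (c y).val = (s.map (fun a : A => ord.ltm a.val)).sum :=
    fun y => ord.exists_multiset_of_mem_adjoin (c y).2
  choose ss hss using hsex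
  have hx1 : ord.ltm h.val = ∑ y ∈ c.support, (c y).val * y.val := by
    calc ord.ltm h.val = (⟨ord.ltm h.val, hxmem⟩ : LtAlg ord A).val := rfl
      _ = ((c.sum fun mi r => r • mi : LtAlg ord A)).val := by rw [hcsum]
      _ = ((∑ y ∈ c.support, c y • y : LtAlg ord A)).val := rfl
      _ = ∑ y ∈ c.support, ((c y • y : LtAlg ord A)).val :=
          AddSubmonoidClass.coe_finset_sum _ _
      _ = ∑ y ∈ c.support, (c y).val * y.val :=
          Finset.sum_congr rfl fun y _ => by rw [smul_eq_mul, MulMemClass.coe_mul]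
  set m0 : Multiset (A × A) :=
    (c.support.attach.1).bind (fun y => (ss y.1).map (fun a : A => (a, gg y.1 y.2))) with hm0
  have hm0G : ∀ p ∈ m0, p.2 ∈ G := by
    intro p hp
    rw [hm0] at hp
    obtain ⟨y, hy, hp2⟩ := Multiset.mem_bind.mp hp
    obtain ⟨a, _, rfl⟩ := Multiset.mem_map.mp hp2
    exact hggG y.1 y.2
  have hE : ord.ltm h.val
      = (m0.map (fun p : A × A => ord.ltm (p.1.val * p.2.val))).sum := by
    rw [hx1]
    have step : ∀ y : {z : LtAlg ord A // z ∈ c.support},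
        (((ss y.1).map (fun a : A => (a, gg y.1 y.2))).map
          (fun p : A × A => ord.ltm (p.1.val * p.2.val))).sum
        = (c y.1).val * y.1.val := by
      intro y
      rw [Multiset.map_map]
      rw [show ((fun p : A × A => ord.ltm (p.1.val * p.2.val)) ∘ (fun a : A => (a, gg y.1 y.2)))
          = fun a : A => ord.ltm a.val * ord.ltm (gg y.1 y.2).val by
        funext a
        simp only [Function.comp_apply]
        rw [ord.ltm_mul]]
      rw [Multiset.sum_map_mul_right, ← hss y.1, ← hggy y.1 y.2]
    calc ∑ y ∈ c.support, (c y).val * y.val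
        = ∑ y ∈ c.support.attach, (c y.1).val * y.1.val := (Finset.sum_attach _ _).symm
      _ = ∑ y ∈ c.support.attach, (((ss y.1).map (fun a : A => (a, gg y.1 y.2))).map
            (fun p : A × A => ord.ltm (p.1.val * p.2.val))).sum :=
          Finset.sum_congr rfl fun y _ => (step y).symm
      _ = (m0.map (fun p : A × A => ord.ltm (p.1.val * p.2.val))).sum := by
          rw [hm0, Multiset.map_bind, Multiset.sum_bind]
          rfl
  set m1 : Multiset (A × A) := m0.filter
    (fun p : A × A => (p.1.val * p.2.val : MvPolynomial (Fin n) R) ≠ 0 ∧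
      ord.lp (p.1.val * p.2.val) = α) with hm1
  have hm1mem : ∀ p ∈ m1, p ∈ m0 ∧ (p.1.val * p.2.val : MvPolynomial (Fin n) R) ≠ 0 ∧
      ord.lp (p.1.val * p.2.val) = α := by
    intro p hp
    rw [hm1] at hp
    exact Multiset.mem_filter.mp hp
  have hlc : ord.lc h.val = (m1.map (fun p : A × A => ord.lc (p.1.val * p.2.val))).sum := by
    have h1 := congrArg (MvPolynomial.coeff α) hE
    rw [TermOrder.coeff_multiset_sum, Multiset.map_map] at h1
    rw [TermOrder.ltm, MvPolynomial.coeff_monomial, if_pos hlp] at h1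
    have h2 : (m0.map ((MvPolynomial.coeff α) ∘
        (fun p : A × A => ord.ltm (p.1.val * p.2.val)))).sum
        = (m1.map (fun p : A × A => ord.lc (p.1.val * p.2.val))).sum := by
      rw [hm1]
      conv_lhs => rw [← Multiset.filter_add_not
        (fun p : A × A => (p.1.val * p.2.val : MvPolynomial (Fin n) R) ≠ 0 ∧
          ord.lp (p.1.val * p.2.val) = α) m0]
      rw [Multiset.map_add, Multiset.sum_add]
      have hz2 : ((m0.filter (fun p : A × A =>
          ¬((p.1.val * p.2.val : MvPolynomial (Fin n) R) ≠ 0 ∧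
            ord.lp (p.1.val * p.2.val) = α))).map ((MvPolynomial.coeff α) ∘
          (fun p : A × A => ord.ltm (p.1.val * p.2.val)))).sum = 0 := by
        apply Multiset.sum_eq_zero
        intro z hz
        obtain ⟨p, hp, rfl⟩ := Multiset.mem_map.mp hz
        have hp2 := (Multiset.mem_filter.mp hp).2
        simp only [Function.comp_apply]
        rw [TermOrder.ltm, MvPolynomial.coeff_monomial]
        by_cases hqp : ord.lp (p.1.val * p.2.val : MvPolynomial (Fin n) R) = α
        · rw [if_pos hqp]
          have hq0 : (p.1.val * p.2.val : MvPolynomial (Fin n) R) = 0 := by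
            by_contra hq0
            exact hp2 ⟨hq0, hqp⟩
          rw [TermOrder.lc, hq0]
          simp
        · rw [if_neg hqp]
      rw [hz2, add_zero]
      apply congrArg Multiset.sum
      apply Multiset.map_congr rfl
      intro p hp
      have hp2 := (Multiset.mem_filter.mp hp).2
      simp only [Function.comp_apply]
      rw [TermOrder.ltm, MvPolynomial.coeff_monomial, if_pos hp2.2]
    rw [← h2]
    exact h1
  set sA : A := (m1.map (fun p : A × A => p.1 * p.2)).sum with hsA
  have hsAval : sA.val = (m1.map (fun p : A × A => p.1.val * p.2.val)).sum := by
    rw [hsA]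
    rw [show ((m1.map (fun p : A × A => p.1 * p.2)).sum : A).val
        = (A.val) (m1.map (fun p : A × A => p.1 * p.2)).sum from rfl]
    rw [map_multiset_sum, Multiset.map_map]
    rfl
  have hsAI : sA ∈ I := by
    rw [hsA]
    refine multiset_sum_mem _ fun w hw => ?_
    obtain ⟨p, hp, rfl⟩ := Multiset.mem_map.mp hw
    exact I.mul_mem_left p.1 (hGI (hm0G p (hm1mem p hp).1))
  have hcαs : MvPolynomial.coeff α sA.val = ord.lc h.val := by
    rw [hsAval, TermOrder.coeff_multiset_sum, hlc, Multiset.map_map]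
    apply congrArg Multiset.sum
    apply Multiset.map_congr rfl
    intro p hp
    simp only [Function.comp_apply]
    rw [TermOrder.lc, (hm1mem p hp).2.2]
  have hbound : ∀ β, MvPolynomial.coeff β sA.val ≠ 0 → ord.lo.le β α := by
    intro β hb
    rw [hsAval, TermOrder.coeff_multiset_sum] at hb
    have hex : ∃ z ∈ (m1.map (fun p : A × A => p.1.val * p.2.val)).map
        (MvPolynomial.coeff β), z ≠ 0 := by
      by_contra hall
      push_neg at hall
      exact hb (Multiset.sum_eq_zero hall)
    obtain ⟨z, hz, hzne⟩ := hex
    obtain ⟨w, hw, rfl⟩ := Multiset.mem_map.mp hz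
    obtain ⟨p, hp, rfl⟩ := Multiset.mem_map.mp hw
    have hle := ord.le_lp hzne
    rw [(hm1mem p hp).2.2] at hle
    exact hle
  set h' : A := h - sA with hh'
  have hh'I : h' ∈ I := I.sub_mem hI hsAI
  have hh'val : h'.val = h.val - sA.val := rfl
  have hcoeffh' : ∀ β, MvPolynomial.coeff β h'.val ≠ 0 → ord.lo.lt β α := by
    intro β hb
    rw [hh'val, MvPolynomial.coeff_sub] at hb
    have hle : ord.lo.le β α := by
      by_cases h1 : MvPolynomial.coeff β h.val = 0
      · apply hbound
        intro h2
        rw [h1, h2, sub_zero] at hb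
        exact hb rfl
      · rw [← hlp]
        exact ord.le_lp h1
    refine ord.lt_of_le_of_ne' hle ?_
    rintro rfl
    rw [hcαs, show MvPolynomial.coeff β h.val = ord.lc h.val by rw [TermOrder.lc, hlp]] at hb
    exact hb (sub_self _)
  have hm1ne : ∃ p ∈ m1, ord.lp (p.1.val * p.2.val : MvPolynomial (Fin n) R) = α := by
    have hm1ne0 : m1 ≠ 0 := by
      intro h0
      have hc0 : MvPolynomial.coeff α sA.val = 0 := by
        rw [hsAval, h0]
        simp
      rw [hcαs] at hc0
      exact ord.lc_ne_zero hne hc0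
    obtain ⟨p, hp⟩ := Multiset.exists_mem_of_ne_zero hm1ne0
    exact ⟨p, hp, (hm1mem p hp).2.2⟩
  by_cases hz : h'.val = 0
  · refine ⟨m1, ?_, hm1ne, ?_⟩
    · intro p hp
      obtain ⟨hp0, hpne, hplp⟩ := hm1mem p hp
      exact ⟨hm0G p hp0, hpne, ord.le_of_eq' hplp⟩
    · have h9 : h.val - sA.val = 0 := by rw [← hh'val]; exact hz
      rw [sub_eq_zero] at h9
      rw [h9, hsAval]
  · have hlt : ord.lo.lt (ord.lp h'.val) α := hcoeffh' _ (ord.lc_ne_zero hz)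
    obtain ⟨m2, hm2props, hm2ex, hm2sum⟩ := IH (ord.lp h'.val) hlt h' hh'I hz rfl
    refine ⟨m1 + m2, ?_, ?_, ?_⟩
    · intro p hp
      rcases Multiset.mem_add.mp hp with hp | hp
      · obtain ⟨hp0, hpne, hplp⟩ := hm1mem p hp
        exact ⟨hm0G p hp0, hpne, ord.le_of_eq' hplp⟩
      · obtain ⟨h2G, h2ne, h2le⟩ := hm2props p hp
        exact ⟨h2G, h2ne, ord.le_trans' h2le (ord.le_of_lt' hlt)⟩
    · obtain ⟨p, hp, hpe⟩ := hm1ne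
      exact ⟨p, Multiset.mem_add.mpr (Or.inl hp), hpe⟩
    · rw [Multiset.map_add, Multiset.sum_add, ← hsAval, ← hm2sum, hh'val]
      ring


set_option maxHeartbeats 2000000 in
set_option synthInstance.maxHeartbeats 400000 in
/-- `G ⊆ I` is an SG-basis for the ideal `I` of `A` iff every
nonzero `h ∈ I` has an SG-representation `h = ∑ aᵢ gᵢ` with `aᵢ ∈ A`, `gᵢ ∈ G`
and `maxᵢ lp(aᵢ gᵢ) = lp(h)`. -/
theorem isSGBasis_iff_sg_representation {n : ℕ} {R : Type*} [CommRing R]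
    [IsDomain R] [IsNoetherianRing R] (ord : TermOrder n)
    (A : Subalgebra R (MvPolynomial (Fin n) R)) (I : Ideal A) (G : Set A)
    (hGI : G ⊆ (I : Set A)) :
    IsSGBasis ord A I G ↔
      ∀ h : A, h ∈ I → (h : MvPolynomial (Fin n) R) ≠ 0 →
        ∃ (M : ℕ) (a : Fin M → A) (g : Fin M → A),
          (∀ i, g i ∈ G) ∧
          (h : MvPolynomial (Fin n) R) =
            ∑ i, (a i : MvPolynomial (Fin n) R) * (g i : MvPolynomial (Fin n) R) ∧
          (∀ i, ord.lo.le
            (ord.lp ((a i : MvPolynomial (Fin n) R) * (g i : MvPolynomial (Fin n) R)))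
            (ord.lp (h : MvPolynomial (Fin n) R))) ∧
          (∃ i, ord.lp ((a i : MvPolynomial (Fin n) R) * (g i : MvPolynomial (Fin n) R))
            = ord.lp (h : MvPolynomial (Fin n) R)) := by
  constructor
  · intro hSG h hI hne
    obtain ⟨m, hprops, hex, hsum⟩ :=
      sg_rep_multiset ord A I G hGI hSG (ord.lp (h : MvPolynomial (Fin n) R)) h hI hne rfl
    obtain ⟨M, g0, hP, hsum2, hsurj⟩ := exists_fin_index
      (fun p : A × A => (p.1.val * p.2.val : MvPolynomial (Fin n) R))
      (fun p : A × A => p.2 ∈ G ∧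
        ord.lo.le (ord.lp (p.1.val * p.2.val : MvPolynomial (Fin n) R))
          (ord.lp (h : MvPolynomial (Fin n) R))) m
      (fun p hp => ⟨(hprops p hp).1, (hprops p hp).2.2⟩)
    refine ⟨M, fun i => (g0 i).1, fun i => (g0 i).2, fun i => (hP i).1, ?_, fun i => (hP i).2, ?_⟩
    · rw [hsum, hsum2]
    · obtain ⟨p, hp, hpe⟩ := hex
      obtain ⟨i, rfl⟩ := hsurj p hp
      exact ⟨i, hpe⟩
  · intro hrep
    apply le_antisymm
    · apply Ideal.span_mono
      intro x hx
      obtain ⟨w, ⟨g, hgG, rfl⟩, hval⟩ := hx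
      exact ⟨g.val, ⟨g, hGI hgG, rfl⟩, hval⟩
    · rw [Ideal.span_le]
      rintro x hx
      obtain ⟨w, ⟨h, hI, rfl⟩, hval⟩ := hx
      by_cases hz : (h : MvPolynomial (Fin n) R) = 0
      · have hx0 : x = 0 := Subtype.ext (by rw [← hval, hz, ord.ltm_zero]; rfl)
        rw [hx0]
        exact Submodule.zero_mem _
      · obtain ⟨M, a, g, hgG, hsum, hle, i0, hi0⟩ := hrep h hI hz
        classical
        set T : Finset (Fin M) := Finset.univ.filter
          (fun i => ((a i).val * (g i).val : MvPolynomial (Fin n) R) ≠ 0 ∧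
            ord.lp ((a i).val * (g i).val) = ord.lp (h : MvPolynomial (Fin n) R)) with hT
        have hcoeffT : ∀ i, i ∉ T →
            MvPolynomial.coeff (ord.lp (h : MvPolynomial (Fin n) R))
              ((a i).val * (g i).val) = 0 := by
          intro i hi
          rw [hT, Finset.mem_filter] at hi
          push_neg at hi
          by_cases hz2 : ((a i).val * (g i).val : MvPolynomial (Fin n) R) = 0
          · rw [hz2, MvPolynomial.coeff_zero]
          · exact ord.coeff_eq_zero_of_lt
              (ord.lt_of_le_of_ne' (hle i) (hi (Finset.mem_univ i) hz2))
        have hlcsum : ord.lc (h : MvPolynomial (Fin n) R)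
            = ∑ i ∈ T, MvPolynomial.coeff (ord.lp (h : MvPolynomial (Fin n) R))
                ((a i).val * (g i).val) := by
          have h1 := congrArg (MvPolynomial.coeff (ord.lp (h : MvPolynomial (Fin n) R))) hsum
          rw [MvPolynomial.coeff_sum] at h1
          rw [TermOrder.lc, h1]
          exact (Finset.sum_subset (Finset.subset_univ T) (fun i _ hi => hcoeffT i hi)).symm
        have hmemA : ∀ i : Fin M, ord.ltm ((a i).val) ∈ LtAlg ord A :=
          fun i => Algebra.subset_adjoin ⟨(a i).val, (a i).2, rfl⟩
        have hmemGA : ∀ i : Fin M, ord.ltm ((g i).val) ∈ LtAlg ord A :=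
          fun i => Algebra.subset_adjoin ⟨(g i).val, (g i).2, rfl⟩
        have hmemG' : ∀ i : Fin M, (⟨ord.ltm ((g i).val), hmemGA i⟩ : LtAlg ord A) ∈
            (Subtype.val ⁻¹' (ord.ltm '' (Subtype.val '' G)) : Set (LtAlg ord A)) :=
          fun i => ⟨(g i).val, ⟨g i, hgG i, rfl⟩, rfl⟩
        have hxy : x = ∑ i ∈ T, (⟨ord.ltm ((a i).val), hmemA i⟩ : LtAlg ord A) *
            ⟨ord.ltm ((g i).val), hmemGA i⟩ := by
          apply Subtype.ext
          rw [← hval, AddSubmonoidClass.coe_finset_sum]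
          have hterm : ∀ i ∈ T,
              (((⟨ord.ltm ((a i).val), hmemA i⟩ : LtAlg ord A) *
                ⟨ord.ltm ((g i).val), hmemGA i⟩ : LtAlg ord A)).val
              = (MvPolynomial.monomial (ord.lp (h : MvPolynomial (Fin n) R)))
                  (MvPolynomial.coeff (ord.lp (h : MvPolynomial (Fin n) R))
                    ((a i).val * (g i).val)) := by
            intro i hi
            have hiT := (Finset.mem_filter.mp (hT ▸ hi)).2
            rw [MulMemClass.coe_mul]
            show ord.ltm ((a i).val) * ord.ltm ((g i).val) = _
            rw [← ord.ltm_mul, TermOrder.ltm, hiT.2, TermOrder.lc, hiT.2]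
          rw [Finset.sum_congr rfl hterm, ← map_sum, ← hlcsum]
          rfl
        rw [hxy]
        exact SetLike.mem_coe.mpr (Submodule.sum_mem _ fun i hi =>
          Ideal.mul_mem_left _ _ (Ideal.subset_span (hmemG' i)))
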